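/- Let d ≥ 3 and n ≥ 3 be integers with gcd(d − 2, n) = 1, and let t₁ = ⋯ = t_{d−1} = 1 and t_d ≡ −(d − 2) (mod n) with t_d ≥ 1. Then for every i with 0 < i < d, every permutation σ of {1,…,d}, and every i-tuple of positive integers a₁, …, a_i with a₁ + ⋯ + a_i ≤ n and a₁·t_{σ(1)} + ⋯ + a_i·t_{σ(i)} ≡ 0 (mod n), there exist integers b₁, …, b_i with 0 < b_j ≤ a_j + 1 for all j and b₁·t_{σ(1)} + ⋯ + b_i·t_{σ(i)} ≡ −(t_{σ(i+1)} + ⋯ + t_{σ(d)}) (mod n). -/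

import Mathlib

/-- The numerical nearly-Gorenstein criterion for `1/n(1,…,1,t_d)` with
`t_d ≡ -(d-2) (mod n)` and `gcd(d-2, n) = 1` (Proposition 2.4 of the paper). -/
theorem stmt_5 (d : ℕ) (hd : 3 ≤ d) (n : ℤ) (hn : 3 ≤ n)
    (hgcd : Int.gcd ((d : ℤ) - 2) n = 1) (t : Fin d → ℤ)
    (ht1 : ∀ j : Fin d, (j : ℕ) < d - 1 → t j = 1)
    (htd : ∀ j : Fin d, (j : ℕ) = d - 1 → 1 ≤ t j ∧ t j ≡ -((d : ℤ) - 2) [ZMOD n]) :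
    ∀ i : ℕ, 0 < i → i < d → ∀ σ : Equiv.Perm (Fin d), ∀ a : Fin d → ℤ,
      (∀ j : Fin d, (j : ℕ) < i → 0 < a j) →
      (∑ j ∈ Finset.univ.filter (fun j : Fin d => (j : ℕ) < i), a j) ≤ n →
      (∑ j ∈ Finset.univ.filter (fun j : Fin d => (j : ℕ) < i), a j * t (σ j))
          ≡ 0 [ZMOD n] →
      ∃ b : Fin d → ℤ,
        (∀ j : Fin d, (j : ℕ) < i → 0 < b j ∧ b j ≤ a j + 1) ∧
        (∑ j ∈ Finset.univ.filter (fun j : Fin d => (j : ℕ) < i), b j * t (σ j))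
          ≡ -(∑ k ∈ Finset.univ.filter (fun k : Fin d => i ≤ (k : ℕ)), t (σ k))
            [ZMOD n] := by
  intro i hi0 hid σ a ha hsum hcong
  set S := Finset.univ.filter (fun j : Fin d => (j : ℕ) < i) with hS
  set Sc := Finset.univ.filter (fun k : Fin d => i ≤ (k : ℕ)) with hSc
  have hd0 : 0 < d := by omega
  have he : d - 1 < d := by omega
  set e : Fin d := ⟨d - 1, he⟩ with heq
  obtain ⟨hte1, hte2⟩ := htd e rfl
  have ht1' : ∀ j : Fin d, j ≠ e → t j = 1 := by
    intro j hj
    apply ht1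
    have h1 : (j : ℕ) ≠ d - 1 := by
      intro h; exact hj (Fin.ext h)
    have h2 := j.isLt
    omega
  -- total sum of t
  have htot : (∑ j : Fin d, t j) = ((d : ℤ) - 1) + t e := by
    have h1 : ∑ j ∈ Finset.univ.erase e, t j + t e = ∑ j : Fin d, t j :=
      Finset.sum_erase_add _ _ (Finset.mem_univ e)
    have h2 : ∑ j ∈ Finset.univ.erase e, t j = ((d : ℤ) - 1) := by
      rw [Finset.sum_congr rfl (fun j hj => ht1' j (Finset.ne_of_mem_erase hj))]
      simp only [Finset.sum_const, Finset.card_erase_of_mem (Finset.mem_univ e),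
        Finset.card_univ, Fintype.card_fin, nsmul_eq_mul, mul_one]
      omega
    linarith [h1, h2]
  have hsplit : (∑ j ∈ S, t (σ j)) + (∑ k ∈ Sc, t (σ k)) = ((d : ℤ) - 1) + t e := by
    rw [hS, hSc]
    have hfc : Finset.univ.filter (fun k : Fin d => i ≤ (k : ℕ))
        = Finset.univ.filter (fun k : Fin d => ¬ (k : ℕ) < i) := by
      simp [not_lt]
    rw [hfc, Finset.sum_filter_add_sum_filter_not]
    rw [Equiv.sum_comp σ t, htot]
  have htarget : (∑ j ∈ S, t (σ j)) - 1 ≡ -(∑ k ∈ Sc, t (σ k)) [ZMOD n] := by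
    have h1 : (∑ j ∈ S, t (σ j)) - 1
        = ((d : ℤ) - 1) + t e - (∑ k ∈ Sc, t (σ k)) - 1 := by linarith [hsplit]
    rw [h1]
    have h2 : ((d : ℤ) - 1) + t e - (∑ k ∈ Sc, t (σ k)) - 1
        ≡ ((d : ℤ) - 1) + -((d : ℤ) - 2) - (∑ k ∈ Sc, t (σ k)) - 1 [ZMOD n] :=
      (((Int.ModEq.refl _).add hte2).sub (Int.ModEq.refl _)).sub (Int.ModEq.refl _)
    have h3 : ((d : ℤ) - 1) + -((d : ℤ) - 2) - (∑ k ∈ Sc, t (σ k)) - 1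
        = -(∑ k ∈ Sc, t (σ k)) := by ring
    exact h3 ▸ h2
  by_cases hcase : ∃ j ∈ S, t (σ j) = 1
  · -- Case A: some index below i has t-value 1
    obtain ⟨j₀, hj₀S, hj₀t⟩ := hcase
    refine ⟨fun j => if j = j₀ then a j else a j + 1, ?_, ?_⟩
    · intro j hj
      have haj := ha j hj
      constructor <;> [skip; skip] <;> simp only [] <;> split <;> omega
    · show (∑ j ∈ S, (if j = j₀ then a j else a j + 1) * t (σ j))
          ≡ -(∑ k ∈ Sc, t (σ k)) [ZMOD n]
      have hkey : ∑ j ∈ S, (if j = j₀ then a j else a j + 1) * t (σ j)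
          = (∑ j ∈ S, a j * t (σ j)) + (∑ j ∈ S, t (σ j)) - t (σ j₀) := by
        have hc : ∀ j ∈ S, (if j = j₀ then a j else a j + 1) * t (σ j)
            = (a j * t (σ j) + t (σ j)) - (if j = j₀ then t (σ j) else 0) := by
          intro j _; split <;> ring
        rw [Finset.sum_congr rfl hc, Finset.sum_sub_distrib, Finset.sum_add_distrib,
          Finset.sum_ite_eq' S j₀ (fun j => t (σ j)), if_pos hj₀S]
      rw [hkey, hj₀t]
      have h4 := hcong.add_right ((∑ j ∈ S, t (σ j)) - 1)
      rw [zero_add] at h4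
      have h5 : (∑ j ∈ S, a j * t (σ j)) + ((∑ j ∈ S, t (σ j)) - 1)
          = (∑ j ∈ S, a j * t (σ j)) + (∑ j ∈ S, t (σ j)) - 1 := by ring
      rw [h5] at h4
      exact h4.trans htarget
  · -- Case B: every index below i maps to e under σ, so i = 1 and σ 0 = e
    push_neg at hcase
    have hσe : ∀ j ∈ S, σ j = e := by
      intro j hj
      by_contra h
      exact hcase j hj (ht1' (σ j) h)
    have h0S : (⟨0, hd0⟩ : Fin d) ∈ S := by
      simp only [hS, Finset.mem_filter, Finset.mem_univ, true_and]
      exact hi0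
    set j₀ : Fin d := ⟨0, hd0⟩ with hj₀def
    have hσ0 : σ j₀ = e := hσe j₀ h0S
    have hSsing : S = {j₀} :=
      Finset.eq_singleton_iff_unique_mem.mpr
        ⟨h0S, fun j hj => σ.injective ((hσe j hj).trans hσ0.symm)⟩
    -- coprimality data
    have hc : IsCoprime ((d : ℤ) - 2) n := Int.isCoprime_iff_gcd_eq_one.mpr hgcd
    obtain ⟨u, v, huv⟩ := hc
    have hdvd : n ∣ -((d : ℤ) - 2) - t e := hte2.dvd
    obtain ⟨k, hk⟩ := hdvd
    -- IsCoprime n (t e)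
    have hcop : IsCoprime n (t e) := by
      have h1 : IsCoprime n (-((d : ℤ) - 2)) :=
        ((Int.isCoprime_iff_gcd_eq_one.mpr hgcd).symm).neg_right
      have h2 : IsCoprime n (-((d : ℤ) - 2) + n * (-k)) := h1.add_mul_left_right (-k)
      have h3 : -((d : ℤ) - 2) + n * (-k) = t e := by linarith [hk]
      rwa [h3] at h2
    -- a j₀ = n
    have hsum0 : (∑ j ∈ S, a j * t (σ j)) = a j₀ * t e := by
      rw [hSsing, Finset.sum_singleton, hσ0]
    have hdvda : n ∣ a j₀ * t e := by
      have := (Int.modEq_zero_iff_dvd).mp (hsum0 ▸ hcong)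
      exact this
    have hna : n ∣ a j₀ := hcop.dvd_of_dvd_mul_right hdvda
    have ha0 : 0 < a j₀ := ha j₀ hi0
    have hale : a j₀ ≤ n := by
      have := hsum
      rw [hSsing, Finset.sum_singleton] at this
      exact this
    have haN : a j₀ = n := le_antisymm hale (Int.le_of_dvd ha0 hna)
    -- the congruence for the chosen b value
    have hm0 : 0 ≤ u % n := Int.emod_nonneg u (by omega)
    have hm1 : u % n < n := Int.emod_lt_of_pos u (by omega)
    have hmod : (u % n + 1) * t e ≡ t e - 1 [ZMOD n] := by
      have h1 : u % n ≡ u [ZMOD n] := Int.emod_emod_of_dvd u dvd_rfl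
      have h2 : (u % n + 1) * t e ≡ (u + 1) * t e [ZMOD n] := (h1.add_right 1).mul_right _
      refine h2.trans ?_
      rw [Int.modEq_iff_dvd]
      exact ⟨u * k - v, by linear_combination u * hk + huv⟩
    refine ⟨fun j => if j = j₀ then u % n + 1 else 1, ?_, ?_⟩
    · intro j hj
      have hjS : j ∈ S := by
        simp only [hS, Finset.mem_filter, Finset.mem_univ, true_and]; exact hj
      have hjj : j = j₀ := by rw [hSsing] at hjS; simpa using hjS
      subst hjj
      refine ⟨?_, ?_⟩ <;> simp only [if_pos rfl] <;> omega
    · show (∑ j ∈ S, (if j = j₀ then u % n + 1 else 1) * t (σ j))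
          ≡ -(∑ k ∈ Sc, t (σ k)) [ZMOD n]
      have hsumb : (∑ j ∈ S, (if j = j₀ then u % n + 1 else 1) * t (σ j))
          = (u % n + 1) * t e := by
        rw [hSsing, Finset.sum_singleton, if_pos rfl, hσ0]
      have hsum1 : (∑ j ∈ S, t (σ j)) = t e := by
        rw [hSsing, Finset.sum_singleton, hσ0]
      rw [hsumb]
      rw [hsum1] at htarget
      exact hmod.trans htarget
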